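/- arXiv:1508.01646 — 2 statements merged into one kernel-verified Lean document; each statement's English description precedes it below -/
import Mathlib

section
/- Let w be a submultiplicative weight and α, β > 0. There exists a constant C = C(α, β, w) > 0 such that for all g, γ ∈ W_H(L^∞, L^1_w), the operator-valued functions G_n(x) = Σ_{k∈ℤ^d} T_{αk}γ(x) ⊙ T_{αk + n/β} g(x) satisfy Σ_{n∈ℤ^d} ‖G_n‖_{L^∞(ℝ^d, B(H))} · w(n/β) ≤ C · ‖g‖_{W_H(L^∞,L^1_w)} · ‖γ‖_{W_H(L^∞,L^1_w)}. -/
open MeasureTheory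
open scoped ENNReal

/-- The rank-one operator `x ⊙ y : H → H`, `(x ⊙ y)(z) = ⟨z, y⟩ x`. -/
noncomputable def odot {H : Type*} [NormedAddCommGroup H] [InnerProductSpace ℂ H]
    (x y : H) : H →L[ℂ] H :=
  (ContinuousLinearMap.toSpanSingleton ℂ x).comp (innerSL ℂ y)

noncomputable def lqNorm {ι : Type*} (q : ℝ≥0∞) (a : ι → ℝ≥0∞) : ℝ≥0∞ :=
  if q = ∞ then ⨆ k, a k else (∑' k, a k ^ q.toReal) ^ (1 / q.toReal)

def cube {d : ℕ} (α : ℝ) (k : Fin d → ℤ) : Set (Fin d → ℝ) :=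
  {x | ∀ i, α * k i ≤ x i ∧ x i < α * k i + α}

/-- The norm of the weighted amalgam space `W_H(L^p, L^q_v)`. -/
noncomputable def amalgamNorm {d : ℕ} {H : Type*} [NormedAddCommGroup H] (α : ℝ)
    (p q : ℝ≥0∞) (v : (Fin d → ℝ) → ℝ) (f : (Fin d → ℝ) → H) : ℝ≥0∞ :=
  lqNorm q (fun k : Fin d → ℤ =>
    eLpNorm ((cube α k).indicator f) p volume * ENNReal.ofReal (v (fun i => α * k i)))

lemma coe_nnnorm_odot_le {H : Type*} [NormedAddCommGroup H] [InnerProductSpace ℂ H]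
    (x y : H) : (‖odot x y‖₊ : ℝ≥0∞) ≤ (‖x‖₊ : ℝ≥0∞) * ‖y‖₊ := by
  have h : ‖odot x y‖ ≤ ‖x‖ * ‖y‖ := by
    refine (ContinuousLinearMap.opNorm_comp_le _ _).trans ?_
    rw [ContinuousLinearMap.norm_toSpanSingleton, innerSL_apply_norm]
  rw [← ENNReal.coe_mul, ENNReal.coe_le_coe, ← NNReal.coe_le_coe]
  push_cast
  exact h

lemma coe_nnnorm_tsum_le {ι E : Type*} [NormedAddCommGroup E] [CompleteSpace E] (F : ι → E) :
    (‖∑' k, F k‖₊ : ℝ≥0∞) ≤ ∑' k, (‖F k‖₊ : ℝ≥0∞) := by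
  by_cases h : Summable fun k => ‖F k‖₊
  · rw [← ENNReal.coe_tsum h]
    exact_mod_cast nnnorm_tsum_le h
  · have h2 : ∑' k, (‖F k‖₊ : ℝ≥0∞) = ⊤ := by
      by_contra h3
      exact h (ENNReal.tsum_coe_ne_top_iff_summable.mp h3)
    rw [h2]
    exact le_top

lemma ae_transfer {d : ℕ} {P : (Fin d → ℝ) → Prop} (v : Fin d → ℝ)
    (h : ∀ᵐ y : (Fin d → ℝ), P y) : ∀ᵐ x : (Fin d → ℝ), P (x - v) := by
  have h2 := map_add_right_ae (volume : Measure (Fin d → ℝ)) (-v)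
  rw [Filter.Eventually, ← h2, Filter.mem_map] at h
  simpa [Filter.Eventually, sub_eq_add_neg, Set.preimage] using h

lemma floor_mem_aux {a b : ℝ} (ha : 0 < a) : a * ⌊b / a⌋ ≤ b ∧ b < a * ⌊b / a⌋ + a := by
  constructor
  · have := Int.floor_le (b / a)
    calc a * ⌊b / a⌋ ≤ a * (b / a) := by nlinarith
    _ = b := by field_simp
  · have := Int.lt_floor_add_one (b / a)
    have h2 : b / a * a < (⌊b / a⌋ + 1) * a := by nlinarith
    rw [div_mul_cancel₀ _ ha.ne'] at h2
    nlinarith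

noncomputable def chiW {d : ℕ} (α β : ℝ) (n s : Fin d → ℤ) : ℝ≥0∞ :=
  if ∀ i, -α < α * s i + n i / β ∧ α * s i + n i / β ≤ α then 1 else 0

lemma chi_count {d : ℕ} {α β : ℝ} (hα : 0 < α) (hβ : 0 < β) (s : Fin d → ℤ) :
    ∑' n : Fin d → ℤ, chiW α β n s ≤ ((⌈2 * α * β⌉₊ + 1 : ℕ) : ℝ≥0∞) ^ d := by
  classical
  set N : ℕ := ⌈2 * α * β⌉₊ + 1 with hN
  set box : Finset (Fin d → ℤ) :=
    Fintype.piFinset (fun i => Finset.Icc (⌊β * (-α - α * s i)⌋ + 1) ⌊β * (α - α * s i)⌋) with hbox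
  have hsub : ∀ n, chiW α β n s ≤ Set.indicator ↑box (fun _ => (1 : ℝ≥0∞)) n := by
    intro n
    rw [chiW]
    split_ifs with h
    · rw [Set.indicator_of_mem]
      rw [Finset.mem_coe, hbox, Fintype.mem_piFinset]
      intro i
      obtain ⟨h1, h2⟩ := h i
      rw [Finset.mem_Icc]
      constructor
      · have hlt : β * (-α - α * s i) < n i := by
          have hlt' : -α - α * s i < n i / β := by linarith
          calc β * (-α - α * s i) < β * (n i / β) := by nlinarith
          _ = n i := by field_simp
        have := Int.floor_lt.mpr hlt
        omega
      · apply Int.le_floor.mpr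
        have hle' : (n i : ℝ) / β ≤ α - α * s i := by linarith
        calc (n i : ℝ) = β * (n i / β) := by field_simp
        _ ≤ β * (α - α * s i) := by nlinarith
    · exact zero_le
  have hcard : box.card ≤ N ^ d := by
    rw [hbox, Fintype.card_piFinset]
    calc ∏ i : Fin d, (Finset.Icc (⌊β * (-α - α * s i)⌋ + 1) ⌊β * (α - α * s i)⌋).card
        ≤ ∏ _i : Fin d, N := by
          apply Finset.prod_le_prod'
          intro i _
          rw [Int.card_Icc]
          have h1 : (⌊β * (α - α * s i)⌋ : ℝ) ≤ β * (α - α * s i) := Int.floor_le _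
          have h2 : β * (-α - α * s i) - 1 < ⌊β * (-α - α * s i)⌋ := by
            have := Int.lt_floor_add_one (β * (-α - α * s i)); linarith
          have hNr : 2 * α * β + 1 ≤ (⌈2 * α * β⌉₊ : ℝ) + 1 := by
            have := Nat.le_ceil (2 * α * β); linarith
          have hle : (⌊β * (α - α * s i)⌋ + 1 - (⌊β * (-α - α * s i)⌋ + 1) : ℤ) ≤ (N : ℤ) := by
            have hr : ((⌊β * (α - α * s i)⌋ + 1 - (⌊β * (-α - α * s i)⌋ + 1) : ℤ) : ℝ) ≤ (N : ℝ) := by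
              rw [hN]; push_cast; nlinarith
            exact_mod_cast hr
          omega
        _ = N ^ d := by simp [Finset.prod_const]
  calc ∑' n, chiW α β n s ≤ ∑' n, Set.indicator ↑box (fun _ => (1 : ℝ≥0∞)) n :=
        ENNReal.tsum_le_tsum hsub
    _ = ∑ n ∈ box, Set.indicator ↑box (fun _ => (1 : ℝ≥0∞)) n :=
        tsum_eq_sum (fun n hn => Set.indicator_of_notMem (by simpa using hn) _)
    _ ≤ ∑ _n ∈ box, 1 := Finset.sum_le_sum (fun n _ => Set.indicator_le_self' (by simp) n)
    _ = (box.card : ℝ≥0∞) := by simp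
    _ ≤ ((N : ℕ) : ℝ≥0∞) ^ d := by
        calc (box.card : ℝ≥0∞) ≤ ((N ^ d : ℕ) : ℝ≥0∞) := by exact_mod_cast hcard
        _ = ((N : ℕ) : ℝ≥0∞) ^ d := by push_cast; ring

/-- Let `w` be a submultiplicative weight and `α, β > 0`. There is a constant `C = C(α,β,w) > 0`
such that for all `g, γ ∈ W_H(L^∞, L^1_w)`, the operator-valued functions
`G_n(x) = Σ_{k∈ℤ^d} (T_{αk}γ)(x) ⊙ (T_{αk+n/β}g)(x)` satisfy
`Σ_{n∈ℤ^d} ‖G_n‖_{L^∞(ℝ^d,B(H))} w(n/β) ≤ C ‖g‖_{W_H(L^∞,L^1_w)} ‖γ‖_{W_H(L^∞,L^1_w)}`. -/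
theorem walnut_estimate {d : ℕ} {H : Type*} [NormedAddCommGroup H] [InnerProductSpace ℂ H]
    [CompleteSpace H] (w : (Fin d → ℝ) → ℝ)
    (hw_cont : Continuous w) (hw_pos : ∀ x, 0 < w x) (hw_symm : ∀ x, w (-x) = w x)
    (hw_submul : ∀ x y, w (x + y) ≤ w x * w y)
    (α β : ℝ) (hα : 0 < α) (hβ : 0 < β) :
    ∃ C : ℝ, 0 < C ∧ ∀ g γ : (Fin d → ℝ) → H,
      amalgamNorm α ∞ 1 w g < ∞ → amalgamNorm α ∞ 1 w γ < ∞ →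
      ∑' n : Fin d → ℤ,
          essSup (fun x =>
              (‖∑' k : Fin d → ℤ,
                  odot (γ (x - fun i => α * k i))
                    (g (x - (fun i => α * k i) - fun i => n i / β))‖₊ : ℝ≥0∞)) volume *
            ENNReal.ofReal (w (fun i => n i / β)) ≤
        ENNReal.ofReal C * amalgamNorm α ∞ 1 w g * amalgamNorm α ∞ 1 w γ := by
  classical
  -- basic weight facts
  have hw0 : (1 : ℝ) ≤ w 0 := by
    have h := hw_submul 0 0
    rw [add_zero] at h
    nlinarith [hw_pos 0]
  have hw1 : ∀ x, (1 : ℝ) ≤ w x := by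
    intro x
    have h := hw_submul x (-x)
    rw [add_neg_cancel, hw_symm] at h
    nlinarith [hw_pos x]
  -- the sup of w on [-α,α]^d
  obtain ⟨z, hz, hMz⟩ := (isCompact_Icc (a := fun _ : Fin d => -α)
      (b := fun _ : Fin d => α)).exists_isMaxOn
      ⟨0, by constructor <;> intro i <;> simp [hα.le, neg_nonpos] <;> linarith⟩
      hw_cont.continuousOn
  have hMz : ∀ y ∈ Set.Icc (fun _ : Fin d => -α) (fun _ : Fin d => α), w y ≤ w z :=
    fun y hy => hMz hy
  set M : ℝ := w z with hMdef
  have hM1 : (1 : ℝ) ≤ M := hw1 z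
  set N : ℕ := ⌈2 * α * β⌉₊ + 1 with hN
  refine ⟨M * (N : ℝ) ^ d, by positivity, ?_⟩
  intro g γ hgfin hγfin
  set A : (Fin d → ℤ) → ℝ≥0∞ := fun k => eLpNorm ((cube α k).indicator g) ∞ volume with hA
  set B : (Fin d → ℤ) → ℝ≥0∞ := fun k => eLpNorm ((cube α k).indicator γ) ∞ volume with hB
  have hamalg : ∀ f : (Fin d → ℝ) → H, amalgamNorm α ∞ 1 w f
      = ∑' k : Fin d → ℤ, eLpNorm ((cube α k).indicator f) ∞ volume
          * ENNReal.ofReal (w (fun i => α * k i)) := by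
    intro f
    rw [amalgamNorm, lqNorm, if_neg (by simp), ENNReal.toReal_one]
    simp [ENNReal.rpow_one]
  -- a.e. pointwise bounds from the essential sups
  have hgae : ∀ᵐ y : (Fin d → ℝ), ∀ k, y ∈ cube α k → (‖g y‖₊ : ℝ≥0∞) ≤ A k := by
    rw [ae_all_iff]
    intro k
    filter_upwards [ae_le_eLpNormEssSup (f := (cube α k).indicator g) (μ := volume)] with y hy hyk
    calc (‖g y‖₊ : ℝ≥0∞) = ‖(cube α k).indicator g y‖₊ := by rw [Set.indicator_of_mem hyk]
    _ ≤ eLpNormEssSup ((cube α k).indicator g) volume := hy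
    _ = A k := eLpNorm_exponent_top.symm
  have hγae : ∀ᵐ y : (Fin d → ℝ), ∀ k, y ∈ cube α k → (‖γ y‖₊ : ℝ≥0∞) ≤ B k := by
    rw [ae_all_iff]
    intro k
    filter_upwards [ae_le_eLpNormEssSup (f := (cube α k).indicator γ) (μ := volume)] with y hy hyk
    calc (‖γ y‖₊ : ℝ≥0∞) = ‖(cube α k).indicator γ y‖₊ := by rw [Set.indicator_of_mem hyk]
    _ ≤ eLpNormEssSup ((cube α k).indicator γ) volume := hy
    _ = B k := eLpNorm_exponent_top.symm
  have hcube2 : ∀ (y : Fin d → ℝ) (k : Fin d → ℤ),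
      y - (fun i => α * k i) ∈ cube α ((fun i => ⌊y i / α⌋) - k) := by
    intro y k i
    have h := floor_mem_aux (b := y i) hα
    simp only [cube, Set.mem_setOf_eq, Pi.sub_apply]
    push_cast
    refine ⟨by nlinarith [h.1], by nlinarith [h.2]⟩
  -- Step 1: essential sup bound for each n
  have hess : ∀ n : Fin d → ℤ,
      essSup (fun x => (‖∑' k : Fin d → ℤ, odot (γ (x - fun i => α * k i))
          (g (x - (fun i => α * k i) - fun i => n i / β))‖₊ : ℝ≥0∞)) volume
        ≤ ∑' s : Fin d → ℤ, chiW α β n s * ∑' j : Fin d → ℤ, B j * A (j + s) := by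
    intro n
    refine essSup_le_of_ae_le _ ?_
    have h1 : ∀ᵐ x : (Fin d → ℝ), ∀ k : Fin d → ℤ, ∀ j, (x - fun i => α * k i) ∈ cube α j →
        (‖γ (x - fun i => α * k i)‖₊ : ℝ≥0∞) ≤ B j :=
      ae_all_iff.mpr fun k => ae_transfer
        (P := fun y => ∀ j, y ∈ cube α j → (‖γ y‖₊ : ℝ≥0∞) ≤ B j) _ hγae
    have h2 : ∀ᵐ x : (Fin d → ℝ), ∀ k : Fin d → ℤ, ∀ j,
        (x - ((fun i => α * k i) + fun i => n i / β)) ∈ cube α j →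
        (‖g (x - ((fun i => α * k i) + fun i => n i / β))‖₊ : ℝ≥0∞) ≤ A j :=
      ae_all_iff.mpr fun k => ae_transfer
        (P := fun y => ∀ j, y ∈ cube α j → (‖g y‖₊ : ℝ≥0∞) ≤ A j) _ hgae
    filter_upwards [h1, h2] with x H1 H2
    set m : Fin d → ℤ := fun i => ⌊x i / α⌋ with hm
    set p : Fin d → ℤ := fun i => ⌊(x i - n i / β) / α⌋ with hp
    have hsubeq : ∀ k : Fin d → ℤ, x - (fun i => α * k i) - (fun i => n i / β)
        = x - ((fun i => α * k i) + fun i => n i / β) := fun k => by rw [sub_sub]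
    have hcubeγ : ∀ k : Fin d → ℤ, (x - fun i => α * k i) ∈ cube α (m - k) :=
      fun k => hcube2 x k
    have hcubeg : ∀ k : Fin d → ℤ,
        (x - ((fun i => α * k i) + fun i => n i / β)) ∈ cube α (p - k) := by
      intro k
      have h := hcube2 (x - fun i => n i / β) k
      have he : (x - fun i => n i / β) - (fun i => α * k i)
          = x - ((fun i => α * k i) + fun i => n i / β) := by
        funext i
        simp only [Pi.sub_apply, Pi.add_apply]
        ring
      have he2 : (fun i => ⌊(x - fun i' => n i' / β) i / α⌋) = p := by
        funext i
        simp only [Pi.sub_apply, hp]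
      rwa [he, he2] at h
    calc (‖∑' k : Fin d → ℤ, odot (γ (x - fun i => α * k i))
            (g (x - (fun i => α * k i) - fun i => n i / β))‖₊ : ℝ≥0∞)
        ≤ ∑' k : Fin d → ℤ, (‖odot (γ (x - fun i => α * k i))
            (g (x - (fun i => α * k i) - fun i => n i / β))‖₊ : ℝ≥0∞) := coe_nnnorm_tsum_le _
      _ ≤ ∑' k : Fin d → ℤ, B (m - k) * A (p - k) := by
          apply ENNReal.tsum_le_tsum
          intro k
          refine (coe_nnnorm_odot_le _ _).trans ?_
          apply mul_le_mul'
          · exact H1 k (m - k) (hcubeγ k)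
          · rw [hsubeq k]
            exact H2 k (p - k) (hcubeg k)
      _ = ∑' j : Fin d → ℤ, B j * A (j + (p - m)) := by
          rw [← (Equiv.subLeft m).tsum_eq (fun k => B (m - k) * A (p - k))]
          refine tsum_congr fun j => ?_
          simp only [Equiv.subLeft_apply]
          have e1 : m - (m - j) = j := by abel
          have e2 : p - (m - j) = j + (p - m) := by abel
          rw [e1, e2]
      _ ≤ ∑' s : Fin d → ℤ, chiW α β n s * ∑' j : Fin d → ℤ, B j * A (j + s) := by
          have hχ : chiW α β n (p - m) = 1 := by
            rw [chiW, if_pos]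
            intro i
            have hx := floor_mem_aux (b := x i) hα
            have hy := floor_mem_aux (b := x i - n i / β) hα
            simp only [Pi.sub_apply, hm, hp]
            push_cast
            constructor
            · nlinarith [hx.2, hy.1]
            · nlinarith [hx.1, hy.2]
          calc ∑' j : Fin d → ℤ, B j * A (j + (p - m))
              = chiW α β n (p - m) * ∑' j : Fin d → ℤ, B j * A (j + (p - m)) := by
                rw [hχ, one_mul]
            _ ≤ _ := ENNReal.le_tsum (p - m)
  -- termwise weight inequality
  have hterm : ∀ (n s j : Fin d → ℤ), chiW α β n s *
        (B j * A (j + s)) * ENNReal.ofReal (w (fun i => n i / β)) ≤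
      chiW α β n s * (ENNReal.ofReal M *
        ((B j * ENNReal.ofReal (w (fun i => α * j i))) *
         (A (j + s) * ENNReal.ofReal (w (fun i => α * (j + s) i))))) := by
    intro n s j
    rw [chiW]
    split_ifs with h
    · rw [one_mul, one_mul]
      have hwreal : w (fun i => n i / β) ≤ M * (w (fun i => α * j i) * w (fun i => α * (j + s) i)) := by
        set u : Fin d → ℝ := (fun i => n i / β) + (fun i => α * s i) with hu
        have humem : u ∈ Set.Icc (fun _ : Fin d => -α) (fun _ : Fin d => α) := by
          constructor <;> intro i <;>
            simp only [hu, Pi.add_apply] <;> [linarith [(h i).1]; linarith [(h i).2]]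
        have hu_le : w u ≤ M := hMz u humem
        have he : (fun i => n i / β) = u + ((fun i => α * j i) - fun i => α * (j + s) i) := by
          funext i
          simp only [hu, Pi.add_apply, Pi.sub_apply]
          push_cast
          ring
        have h1 : w (fun i => n i / β) ≤ w u * w ((fun i => α * j i) - fun i => α * (j + s) i) := by
          rw [he]; exact hw_submul _ _
        have h2 : w ((fun i => α * j i) - fun i => α * (j + s) i)
            ≤ w (fun i => α * j i) * w (fun i => α * (j + s) i) := by
          have h3 := hw_submul (fun i => α * j i) (-fun i => α * (j + s) i)
          rw [hw_symm (fun i => α * (j + s) i)] at h3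
          rw [sub_eq_add_neg]
          exact h3
        nlinarith [hw_pos u, hw_pos ((fun i => α * j i) - fun i => α * (j + s) i),
          hw_pos (fun i => α * j i), hw_pos (fun i => α * (j + s) i), hw_pos (fun i => n i / β)]
      have hkey : ENNReal.ofReal (w (fun i => n i / β)) ≤
          ENNReal.ofReal M * (ENNReal.ofReal (w (fun i => α * j i)) *
            ENNReal.ofReal (w (fun i => α * (j + s) i))) := by
        rw [← ENNReal.ofReal_mul (hw_pos _).le, ← ENNReal.ofReal_mul (by nlinarith [hw_pos (fun i => α * j i)] : (0:ℝ) ≤ M)]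
        exact ENNReal.ofReal_le_ofReal hwreal
      calc B j * A (j + s) * ENNReal.ofReal (w (fun i => n i / β))
          ≤ B j * A (j + s) * (ENNReal.ofReal M * (ENNReal.ofReal (w (fun i => α * j i)) *
              ENNReal.ofReal (w (fun i => α * (j + s) i)))) := mul_le_mul_right hkey _
        _ = ENNReal.ofReal M * (B j * ENNReal.ofReal (w (fun i => α * j i)) *
              (A (j + s) * ENNReal.ofReal (w (fun i => α * (j + s) i)))) := by ring
    · simp
  -- final assembly
  have hWg : amalgamNorm α ∞ 1 w g
      = ∑' k : Fin d → ℤ, A k * ENNReal.ofReal (w (fun i => α * k i)) := hamalg g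
  have hWγ : amalgamNorm α ∞ 1 w γ
      = ∑' k : Fin d → ℤ, B k * ENNReal.ofReal (w (fun i => α * k i)) := hamalg γ
  rw [hWg, hWγ]
  have hcast : ENNReal.ofReal (M * (N : ℝ) ^ d) = ENNReal.ofReal M * ((N : ℝ≥0∞)) ^ d := by
    rw [ENNReal.ofReal_mul (by linarith), ENNReal.ofReal_pow (by positivity),
      ENNReal.ofReal_natCast]
  calc ∑' n : Fin d → ℤ,
          essSup (fun x =>
              (‖∑' k : Fin d → ℤ,
                  odot (γ (x - fun i => α * k i))
                    (g (x - (fun i => α * k i) - fun i => n i / β))‖₊ : ℝ≥0∞)) volume *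
            ENNReal.ofReal (w (fun i => n i / β))
      ≤ ∑' n : Fin d → ℤ, (∑' s : Fin d → ℤ, chiW α β n s * ∑' j : Fin d → ℤ, B j * A (j + s)) *
          ENNReal.ofReal (w (fun i => n i / β)) :=
        ENNReal.tsum_le_tsum fun n => mul_le_mul_left (hess n) _
    _ = ∑' n : Fin d → ℤ, ∑' s : Fin d → ℤ, ∑' j : Fin d → ℤ,
          chiW α β n s * (B j * A (j + s)) * ENNReal.ofReal (w (fun i => n i / β)) := by
        refine tsum_congr fun n => ?_
        rw [← ENNReal.tsum_mul_right]
        refine tsum_congr fun s => ?_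
        rw [ENNReal.tsum_mul_right, ENNReal.tsum_mul_left]
    _ ≤ ∑' n : Fin d → ℤ, ∑' s : Fin d → ℤ, ∑' j : Fin d → ℤ,
          chiW α β n s * (ENNReal.ofReal M *
            ((B j * ENNReal.ofReal (w (fun i => α * j i))) *
             (A (j + s) * ENNReal.ofReal (w (fun i => α * (j + s) i))))) :=
        ENNReal.tsum_le_tsum fun n => ENNReal.tsum_le_tsum fun s =>
          ENNReal.tsum_le_tsum fun j => hterm n s j
    _ = ∑' s : Fin d → ℤ, (∑' n : Fin d → ℤ, chiW α β n s) * (ENNReal.ofReal M *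
          ∑' j : Fin d → ℤ, (B j * ENNReal.ofReal (w (fun i => α * j i))) *
            (A (j + s) * ENNReal.ofReal (w (fun i => α * (j + s) i)))) := by
        rw [ENNReal.tsum_comm]
        refine tsum_congr fun s => ?_
        rw [← ENNReal.tsum_mul_right]
        refine tsum_congr fun n => ?_
        rw [ENNReal.tsum_mul_left, ENNReal.tsum_mul_left]
    _ ≤ ∑' s : Fin d → ℤ, ((N : ℝ≥0∞)) ^ d * (ENNReal.ofReal M *
          ∑' j : Fin d → ℤ, (B j * ENNReal.ofReal (w (fun i => α * j i))) *
            (A (j + s) * ENNReal.ofReal (w (fun i => α * (j + s) i)))) :=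
        ENNReal.tsum_le_tsum fun s => mul_le_mul_left (chi_count hα hβ s) _
    _ = ((N : ℝ≥0∞)) ^ d * (ENNReal.ofReal M *
          ∑' j : Fin d → ℤ, (B j * ENNReal.ofReal (w (fun i => α * j i))) *
            ∑' s : Fin d → ℤ, (A (j + s) * ENNReal.ofReal (w (fun i => α * (j + s) i)))) := by
        rw [ENNReal.tsum_mul_left]
        congr 1
        rw [ENNReal.tsum_mul_left]
        congr 1
        rw [ENNReal.tsum_comm]
        refine tsum_congr fun j => ?_
        rw [ENNReal.tsum_mul_left]
    _ = ((N : ℝ≥0∞)) ^ d * (ENNReal.ofReal M *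
          ((∑' j : Fin d → ℤ, B j * ENNReal.ofReal (w (fun i => α * j i))) *
           (∑' k : Fin d → ℤ, A k * ENNReal.ofReal (w (fun i => α * k i))))) := by
        congr 1
        congr 1
        rw [← ENNReal.tsum_mul_right]
        refine tsum_congr fun j => ?_
        congr 1
        exact (Equiv.addLeft j).tsum_eq
          (fun k => A k * ENNReal.ofReal (w (fun i => α * k i)))
    _ = ENNReal.ofReal (M * (N : ℝ) ^ d) *
          (∑' k : Fin d → ℤ, A k * ENNReal.ofReal (w (fun i => α * k i))) *
          (∑' k : Fin d → ℤ, B k * ENNReal.ofReal (w (fun i => α * k i))) := by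
        rw [hcast]; ring
end

section
/- Let g ∈ W_H(C₀, L^1_w) be a continuous window with G(g,α,β) a frame for L^2(ℝ^d,H). Then the frame operator S_g maps W_H(C₀, L^1_w) into itself: if f ∈ W_H(L^∞, L^1_w) is continuous, then S_g f = β^{-d} Σ_{n∈ℤ^d} G_n(T_{n/β} f) is continuous, where G_n(x) = Σ_k T_{αk}g(x) ⊙ T_{αk+n/β}g(x). In particular, the series Σ_n G_n(T_{n/β}f) converges uniformly on ℝ^d. -/
open MeasureTheory
open scoped ENNReal

/-- The time-frequency shift `M_{βn}T_{αk} g (t) = e^{2πi⟨βn,t⟩} g(t − αk)`. -/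
noncomputable def tfShift {d : ℕ} {H : Type*} [NormedAddCommGroup H] [NormedSpace ℂ H]
    (α β : ℝ) (g : (Fin d → ℝ) → H) (k n : Fin d → ℤ) : (Fin d → ℝ) → H :=
  fun t => Complex.exp (2 * (Real.pi : ℂ) * Complex.I * ((∑ i, β * n i * t i : ℝ) : ℂ)) •
    g (t - fun i => α * k i)

namespace GaborAux


lemma odot_apply {H : Type*} [NormedAddCommGroup H] [InnerProductSpace ℂ H] (x y z : H) :
    odot x y z = (inner ℂ y z : ℂ) • x := rfl

lemma odot_norm_le {H : Type*} [NormedAddCommGroup H] [InnerProductSpace ℂ H] (x y : H) :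
    ‖odot x y‖ ≤ ‖x‖ * ‖y‖ := by
  apply ContinuousLinearMap.opNorm_le_bound _ (mul_nonneg (norm_nonneg _) (norm_nonneg _))
  intro z
  rw [odot_apply, norm_smul]
  calc ‖(inner ℂ y z : ℂ)‖ * ‖x‖ ≤ (‖y‖ * ‖z‖) * ‖x‖ :=
        mul_le_mul_of_nonneg_right (norm_inner_le_norm y z) (norm_nonneg _)
    _ = ‖x‖ * ‖y‖ * ‖z‖ := by ring

lemma odot_eq_smulRight {H : Type*} [NormedAddCommGroup H] [InnerProductSpace ℂ H] (x y : H) :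
    odot x y = (innerSL ℂ y).smulRight x := by
  ext z; rfl

lemma continuous_odot {H : Type*} [NormedAddCommGroup H] [InnerProductSpace ℂ H]
    [CompleteSpace H] :
    Continuous fun p : H × H => odot p.1 p.2 := by
  simp only [odot_eq_smulRight]
  have h1 : Continuous fun p : H × H =>
      (ContinuousLinearMap.smulRightL ℂ H H (innerSL ℂ p.2)) :=
    (ContinuousLinearMap.smulRightL ℂ H H).continuous.comp ((innerSL ℂ).continuous.comp continuous_snd)
  exact h1.clm_apply continuous_fst

lemma floor_add_floor_le (u v : ℝ) : ⌊u⌋ + ⌊v⌋ ≤ ⌊u + v⌋ :=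
  Int.le_floor.2 (by push_cast; linarith [Int.floor_le u, Int.floor_le v])

lemma floor_add_le_add (u v : ℝ) : ⌊u + v⌋ ≤ ⌊u⌋ + ⌊v⌋ + 1 := by
  have h : ⌊u + v⌋ < ⌊u⌋ + ⌊v⌋ + 2 := by
    rw [Int.floor_lt]
    push_cast
    linarith [Int.lt_floor_add_one u, Int.lt_floor_add_one v]
  omega

lemma floor_sub_floor_sub_le (u s : ℝ) : ⌊u⌋ - ⌊u - s⌋ ≤ ⌊s⌋ + 1 := by
  have h := floor_add_le_add (u - s) s
  rw [sub_add_cancel] at h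
  omega

lemma cube_eq_pi {d : ℕ} (α : ℝ) (k : Fin d → ℤ) :
    cube α k = Set.pi Set.univ (fun i => Set.Ico (α * k i) (α * k i + α)) := by
  ext x
  simp [cube, Set.mem_pi, Set.mem_Ico]

lemma mem_cube_floor {d : ℕ} {α : ℝ} (hα : 0 < α) (x : Fin d → ℝ) :
    x ∈ cube α (fun i => ⌊x i / α⌋) := by
  intro i
  have h1 : (⌊x i / α⌋ : ℝ) ≤ x i / α := Int.floor_le _
  have h2 : x i / α < ⌊x i / α⌋ + 1 := Int.lt_floor_add_one _
  have h1' : (⌊x i / α⌋ : ℝ) * α ≤ x i := (le_div_iff₀ hα).1 h1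
  have h2' : x i < ((⌊x i / α⌋ : ℝ) + 1) * α := (div_lt_iff₀ hα).1 h2
  constructor <;> nlinarith

lemma volume_ball_inter_cube_pos {d : ℕ} {α : ℝ} (hα : 0 < α) {k : Fin d → ℤ}
    {x : Fin d → ℝ} (hx : x ∈ cube α k) {ε : ℝ} (hε : 0 < ε) :
    0 < volume (Metric.ball x ε ∩ cube α k) := by
  rw [cube_eq_pi, ball_pi x hε, ← Set.pi_inter_distrib, volume_pi_pi]
  rw [CanonicallyOrderedAdd.prod_pos]
  intro i _
  have hxi := hx i
  have hsub : Set.Ico (x i) (min (x i + ε) (α * k i + α)) ⊆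
      Metric.ball (x i) ε ∩ Set.Ico (α * k i) (α * k i + α) := by
    intro y hy
    rcases hy with ⟨h1, h2⟩
    rw [lt_min_iff] at h2
    constructor
    · rw [Real.ball_eq_Ioo]
      exact ⟨by linarith, h2.1⟩
    · exact ⟨le_trans hxi.1 h1, h2.2⟩
  have hpos : 0 < volume (Set.Ico (x i) (min (x i + ε) (α * k i + α))) := by
    rw [Real.volume_Ico]
    apply ENNReal.ofReal_pos.2
    rw [sub_pos, lt_min_iff]
    exact ⟨by linarith, hxi.2⟩
  exact lt_of_lt_of_le hpos (measure_mono hsub)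

lemma nnnorm_le_eLpNormTop {d : ℕ} {H : Type*} [NormedAddCommGroup H] {α : ℝ} (hα : 0 < α)
    {g : (Fin d → ℝ) → H} (hg : Continuous g) {k : Fin d → ℤ} {x : Fin d → ℝ}
    (hx : x ∈ cube α k) :
    (‖g x‖₊ : ℝ≥0∞) ≤ eLpNorm ((cube α k).indicator g) ∞ volume := by
  rw [eLpNorm_exponent_top]
  by_contra hlt
  push_neg at hlt
  set c := eLpNormEssSup ((cube α k).indicator g) volume with hcdef
  have hopen : IsOpen {y : Fin d → ℝ | c < (‖g y‖₊ : ℝ≥0∞)} :=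
    isOpen_lt continuous_const (ENNReal.continuous_coe.comp hg.nnnorm)
  obtain ⟨ε, hε, hball⟩ := Metric.isOpen_iff.1 hopen x hlt
  have hae : ∀ᵐ y, (‖(cube α k).indicator g y‖₊ : ℝ≥0∞) ≤ c :=
    ENNReal.ae_le_essSup _
  rw [MeasureTheory.ae_iff] at hae
  have hsub : Metric.ball x ε ∩ cube α k ⊆
      {y | ¬ ((‖(cube α k).indicator g y‖₊ : ℝ≥0∞) ≤ c)} := by
    rintro y ⟨hy1, hy2⟩
    simp only [Set.mem_setOf_eq, not_le]
    rw [Set.indicator_of_mem hy2]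
    exact hball hy1
  exact absurd (measure_mono_null hsub hae) (volume_ball_inter_cube_pos hα hx hε).ne'


noncomputable def flr {d : ℕ} (α : ℝ) (x : Fin d → ℝ) : Fin d → ℤ := fun i => ⌊x i / α⌋

noncomputable def cfun {d : ℕ} (a : (Fin d → ℤ) → ℝ) (q : Fin d → ℤ) : ℝ :=
  ∑' j, a j * a (q + j)

noncomputable def q0f {d : ℕ} (β α : ℝ) (n : Fin d → ℤ) : Fin d → ℤ :=
  fun i => ⌊-(n i : ℝ) / (β * α)⌋

theorem core {d : ℕ} {H : Type*} [NormedAddCommGroup H]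
    [InnerProductSpace ℂ H] [CompleteSpace H]
    (α β : ℝ) (hα : 0 < α) (hβ : 0 < β)
    (g f : (Fin d → ℝ) → H) (hgc : Continuous g) (hfc : Continuous f)
    (a b : (Fin d → ℤ) → ℝ) (ha0 : ∀ k, 0 ≤ a k) (hb0 : ∀ k, 0 ≤ b k)
    (hasum : Summable a) (hbsum : Summable b)
    (hg_le : ∀ x, ‖g x‖ ≤ a (flr α x))
    (hf_le' : ∀ x, ‖f x‖ ≤ b (flr α x)) :
    Continuous (fun x : Fin d → ℝ => (β ^ d : ℝ)⁻¹ •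
        ∑' n : Fin d → ℤ,
          (∑' k : Fin d → ℤ,
            odot (g (x - fun i => α * k i)) (g (x - (fun i => α * k i) - fun i => n i / β)))
            (f (x - fun i => n i / β))) ∧
      TendstoUniformly
        (fun (s : Finset (Fin d → ℤ)) (x : Fin d → ℝ) =>
          ∑ n ∈ s,
            (∑' k : Fin d → ℤ,
              odot (g (x - fun i => α * k i)) (g (x - (fun i => α * k i) - fun i => n i / β)))
              (f (x - fun i => n i / β)))
        (fun x : Fin d → ℝ =>
          ∑' n : Fin d → ℤ,
            (∑' k : Fin d → ℤ,
              odot (g (x - fun i => α * k i)) (g (x - (fun i => α * k i) - fun i => n i / β)))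
              (f (x - fun i => n i / β)))
        Filter.atTop := by
  classical
  have haG : ∀ m, a m ≤ ∑' k, a k := fun m => Summable.le_tsum hasum m (fun j _ => ha0 j)
  have hf_le : ∀ x, ‖f x‖ ≤ ∑' k, b k := fun x =>
    (hf_le' x).trans (Summable.le_tsum hbsum _ fun j _ => hb0 j)
  have hFb0 : (0 : ℝ) ≤ ∑' k, b k := tsum_nonneg hb0
  have hG0 : (0 : ℝ) ≤ ∑' k, a k := tsum_nonneg ha0
  have hprod : Summable (fun p : (Fin d → ℤ) × (Fin d → ℤ) => a p.1 * a p.2) :=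
    hasum.mul_of_nonneg hasum ha0 ha0
  have hcsummand : Summable (fun p : (Fin d → ℤ) × (Fin d → ℤ) => a p.2 * a (p.1 + p.2)) := by
    have heq : (fun p : (Fin d → ℤ) × (Fin d → ℤ) => a p.2 * a (p.1 + p.2))
        = (fun p : (Fin d → ℤ) × (Fin d → ℤ) => a p.1 * a p.2) ∘ (fun p => (p.2, p.1 + p.2)) := rfl
    rw [heq]
    apply hprod.comp_injective
    intro p q hpq
    have h1 : p.2 = q.2 := congrArg Prod.fst hpq
    have h2 : p.1 + p.2 = q.1 + q.2 := congrArg Prod.snd hpq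
    have h3 : p.1 = q.1 := by
      rw [h1] at h2
      exact add_right_cancel h2
    exact Prod.ext h3 h1
  have hcsum : Summable (cfun a) := hcsummand.prod
  have hc0 : ∀ q, 0 ≤ cfun a q := fun q => tsum_nonneg fun j => mul_nonneg (ha0 _) (ha0 _)
  have hβα : 0 < β * α := mul_pos hβ hα
  -- fiber counting
  have hcard : ∀ (s : Finset (Fin d → ℤ)) (e m : Fin d → ℤ),
      (s.filter (fun n => q0f β α n + e = m)).card ≤ ((⌊β * α⌋).toNat + 1) ^ d := by
    intro s e m
    have hsubset : s.filter (fun n => q0f β α n + e = m) ⊆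
        Fintype.piFinset fun i => Finset.Icc (⌊-((m i - e i + 1 : ℤ) : ℝ) * (β * α)⌋ + 1)
          ⌊-((m i - e i : ℤ) : ℝ) * (β * α)⌋ := by
      intro n hn
      rw [Finset.mem_filter] at hn
      rw [Fintype.mem_piFinset]
      intro i
      have hni : q0f β α n i + e i = m i := by
        have := congrFun hn.2 i
        simpa using this
      have ht : ⌊-(n i : ℝ) / (β * α)⌋ = m i - e i := by
        rw [show q0f β α n i = ⌊-(n i : ℝ) / (β * α)⌋ from rfl] at hni
        omega
      have h1 : ((m i - e i : ℤ) : ℝ) ≤ -(n i : ℝ) / (β * α) := by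
        rw [← ht]
        exact Int.floor_le _
      have h2 : -(n i : ℝ) / (β * α) < ((m i - e i : ℤ) : ℝ) + 1 := by
        rw [← ht]
        exact Int.lt_floor_add_one _
      have h1' : ((m i - e i : ℤ) : ℝ) * (β * α) ≤ -(n i : ℝ) := (le_div_iff₀ hβα).1 h1
      have h2' : -(n i : ℝ) < (((m i - e i : ℤ) : ℝ) + 1) * (β * α) := (div_lt_iff₀ hβα).1 h2
      rw [Finset.mem_Icc]
      constructor
      · have hfle : (⌊-((m i - e i + 1 : ℤ) : ℝ) * (β * α)⌋ : ℝ) ≤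
            -((m i - e i + 1 : ℤ) : ℝ) * (β * α) := Int.floor_le _
        have hlt : (⌊-((m i - e i + 1 : ℤ) : ℝ) * (β * α)⌋ : ℝ) < (n i : ℝ) := by
          push_cast at hfle h2' ⊢
          nlinarith
        have hlt' : ⌊-((m i - e i + 1 : ℤ) : ℝ) * (β * α)⌋ < n i := by exact_mod_cast hlt
        omega
      · apply Int.le_floor.2
        push_cast at h1' ⊢
        nlinarith
    calc (s.filter (fun n => q0f β α n + e = m)).card
        ≤ _ := Finset.card_le_card hsubset
      _ ≤ ((⌊β * α⌋).toNat + 1) ^ d := by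
          rw [Fintype.card_piFinset]
          have hIcc : ∀ i : Fin d,
              (Finset.Icc (⌊-((m i - e i + 1 : ℤ) : ℝ) * (β * α)⌋ + 1)
                ⌊-((m i - e i : ℤ) : ℝ) * (β * α)⌋).card ≤ (⌊β * α⌋).toNat + 1 := by
            intro i
            rw [Int.card_Icc]
            have harg : -((m i - e i + 1 : ℤ) : ℝ) * (β * α)
                = -((m i - e i : ℤ) : ℝ) * (β * α) - β * α := by push_cast; ring
            have h4 := floor_sub_floor_sub_le (-((m i - e i : ℤ) : ℝ) * (β * α)) (β * α)
            rw [← harg] at h4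
            have h5 : (0 : ℤ) ≤ ⌊β * α⌋ := Int.floor_nonneg.2 hβα.le
            omega
          calc ∏ i : Fin d, (Finset.Icc _ _).card ≤ ∏ _i : Fin d, ((⌊β * α⌋).toNat + 1) :=
                Finset.prod_le_prod' fun i _ => hIcc i
            _ = ((⌊β * α⌋).toNat + 1) ^ d := by
                rw [Finset.prod_const, Finset.card_univ, Fintype.card_fin]
  -- summability of the majorant
  have husum : Summable (fun n : Fin d → ℤ =>
      (∑ e ∈ Fintype.piFinset (fun _ : Fin d => ({0, 1} : Finset ℤ)),
        cfun a (q0f β α n + e)) * ∑' k, b k) := by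
    apply Summable.mul_right
    apply summable_sum
    intro e _
    apply summable_of_sum_le (Pi.le_def.2 fun n => hc0 _)
    intro s
    calc ∑ n ∈ s, cfun a (q0f β α n + e)
        = ∑ m ∈ s.image (fun n => q0f β α n + e),
            ∑ n ∈ s.filter (fun n => q0f β α n + e = m), cfun a (q0f β α n + e) :=
          (Finset.sum_fiberwise_of_maps_to (fun n hn => Finset.mem_image_of_mem _ hn) _).symm
      _ ≤ ∑ m ∈ s.image (fun n => q0f β α n + e), (((⌊β * α⌋).toNat + 1) ^ d : ℝ) * cfun a m := by
          apply Finset.sum_le_sum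
          intro m hm
          calc ∑ n ∈ s.filter (fun n => q0f β α n + e = m), cfun a (q0f β α n + e)
              = ∑ n ∈ s.filter (fun n => q0f β α n + e = m), cfun a m :=
                Finset.sum_congr rfl (fun n hn => by rw [(Finset.mem_filter.1 hn).2])
            _ = ((s.filter (fun n => q0f β α n + e = m)).card : ℝ) * cfun a m := by
                rw [Finset.sum_const, nsmul_eq_mul]
            _ ≤ (((⌊β * α⌋).toNat + 1) ^ d : ℝ) * cfun a m := by
                apply mul_le_mul_of_nonneg_right _ (hc0 m)
                exact_mod_cast hcard s e m
      _ = (((⌊β * α⌋).toNat + 1) ^ d : ℝ) * ∑ m ∈ s.image (fun n => q0f β α n + e), cfun a m := by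
          rw [Finset.mul_sum]
      _ ≤ (((⌊β * α⌋).toNat + 1) ^ d : ℝ) * ∑' m, cfun a m :=
          mul_le_mul_of_nonneg_left (Summable.sum_le_tsum _ (fun m _ => hc0 m) hcsum) (by positivity)
  -- floor translation
  have hflsub : ∀ (y : Fin d → ℝ) (k : Fin d → ℤ), flr α (y - fun i => α * k i) = flr α y - k := by
    intro y k
    funext i
    show ⌊(y i - α * k i) / α⌋ = ⌊y i / α⌋ - k i
    rw [sub_div, mul_comm α ((k i : ℝ)), mul_div_assoc, div_self hα.ne', mul_one]
    exact_mod_cast Int.floor_sub_intCast _ _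
  -- norm of each rank-one term
  have hTle : ∀ (n : Fin d → ℤ) (x : Fin d → ℝ) (k : Fin d → ℤ),
      ‖odot (g (x - fun i => α * k i)) (g (x - (fun i => α * k i) - fun i => n i / β))‖
        ≤ a (flr α x - k) * a (flr α (x - fun i => (n i : ℝ) / β) - k) := by
    intro n x k
    have e1 : flr α (x - fun i => α * k i) = flr α x - k := hflsub x k
    have e2 : flr α (x - (fun i => α * k i) - fun i => (n i : ℝ) / β)
        = flr α (x - fun i => (n i : ℝ) / β) - k := by
      rw [sub_right_comm]
      exact hflsub _ k
    calc ‖odot (g (x - fun i => α * k i)) (g (x - (fun i => α * k i) - fun i => n i / β))‖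
        ≤ ‖g (x - fun i => α * k i)‖ * ‖g (x - (fun i => α * k i) - fun i => (n i : ℝ) / β)‖ :=
          odot_norm_le _ _
      _ ≤ a (flr α x - k) * a (flr α (x - fun i => (n i : ℝ) / β) - k) := by
          apply mul_le_mul _ _ (norm_nonneg _) (ha0 _)
          · rw [← e1]; exact hg_le _
          · rw [← e2]; exact hg_le _
  have hMsum : ∀ (n : Fin d → ℤ) (x : Fin d → ℝ),
      Summable (fun k => a (flr α x - k) * a (flr α (x - fun i => (n i : ℝ) / β) - k)) := by
    intro n x
    have hinj : Function.Injective
        (fun k : Fin d → ℤ => (flr α x - k, flr α (x - fun i => (n i : ℝ) / β) - k)) := by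
      intro k1 k2 hk
      have h1 := congrArg Prod.fst hk
      simp only at h1
      exact sub_right_injective h1
    have h2 := hprod.comp_injective hinj
    exact h2
  have hTnormsum : ∀ (n : Fin d → ℤ) (x : Fin d → ℝ),
      Summable (fun k : Fin d → ℤ =>
        ‖odot (g (x - fun i => α * k i)) (g (x - (fun i => α * k i) - fun i => n i / β))‖) :=
    fun n x => Summable.of_nonneg_of_le (fun k => norm_nonneg _) (hTle n x) (hMsum n x)
  have hδeq : ∀ (n : Fin d → ℤ) (x : Fin d → ℝ),
      ∑' k, a (flr α x - k) * a (flr α (x - fun i => (n i : ℝ) / β) - k)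
        = cfun a (flr α (x - fun i => (n i : ℝ) / β) - flr α x) := by
    intro n x
    rw [cfun, ← (Equiv.subLeft (flr α x)).tsum_eq
      (fun k => a (flr α x - k) * a (flr α (x - fun i => (n i : ℝ) / β) - k))]
    apply tsum_congr
    intro j
    simp only [Equiv.subLeft_apply]
    rw [sub_sub_cancel]
    congr 2
    abel
  -- the pointwise uniform bound
  have hbound : ∀ (n : Fin d → ℤ) (x : Fin d → ℝ),
      ‖(∑' k : Fin d → ℤ,
          odot (g (x - fun i => α * k i)) (g (x - (fun i => α * k i) - fun i => n i / β)))
          (f (x - fun i => n i / β))‖ ≤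
        (∑ e ∈ Fintype.piFinset (fun _ : Fin d => ({0, 1} : Finset ℤ)),
          cfun a (q0f β α n + e)) * ∑' k, b k := by
    intro n x
    have hδE : ∃ e ∈ Fintype.piFinset (fun _ : Fin d => ({0, 1} : Finset ℤ)),
        flr α (x - fun i => (n i : ℝ) / β) - flr α x = q0f β α n + e := by
      refine ⟨flr α (x - fun i => (n i : ℝ) / β) - flr α x - q0f β α n, ?_, by abel⟩
      rw [Fintype.mem_piFinset]
      intro i
      have harg : (x i - (n i : ℝ) / β) / α = x i / α + (-(n i : ℝ) / (β * α)) := by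
        field_simp
        ring
      have hlow := floor_add_floor_le (x i / α) (-(n i : ℝ) / (β * α))
      have hhigh := floor_add_le_add (x i / α) (-(n i : ℝ) / (β * α))
      have hcomp : (flr α (x - fun i => (n i : ℝ) / β) - flr α x - q0f β α n) i
          = ⌊(x i - (n i : ℝ) / β) / α⌋ - ⌊x i / α⌋ - ⌊-(n i : ℝ) / (β * α)⌋ := rfl
      rw [hcomp, harg]
      simp only [Finset.mem_insert, Finset.mem_singleton]
      omega
    calc ‖(∑' k : Fin d → ℤ,
          odot (g (x - fun i => α * k i)) (g (x - (fun i => α * k i) - fun i => n i / β)))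
          (f (x - fun i => n i / β))‖
        ≤ ‖∑' k : Fin d → ℤ,
            odot (g (x - fun i => α * k i)) (g (x - (fun i => α * k i) - fun i => n i / β))‖
          * ‖f (x - fun i => (n i : ℝ) / β)‖ := ContinuousLinearMap.le_opNorm _ _
      _ ≤ (∑' k : Fin d → ℤ,
            ‖odot (g (x - fun i => α * k i)) (g (x - (fun i => α * k i) - fun i => n i / β))‖)
          * ∑' k, b k :=
          mul_le_mul (norm_tsum_le_tsum_norm (hTnormsum n x)) (hf_le _) (norm_nonneg _)
            (tsum_nonneg fun k => norm_nonneg _)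
      _ ≤ (∑' k, a (flr α x - k) * a (flr α (x - fun i => (n i : ℝ) / β) - k)) * ∑' k, b k :=
          mul_le_mul_of_nonneg_right (Summable.tsum_le_tsum (hTle n x) (hTnormsum n x) (hMsum n x)) hFb0
      _ = cfun a (flr α (x - fun i => (n i : ℝ) / β) - flr α x) * ∑' k, b k := by rw [hδeq n x]
      _ ≤ _ := by
          obtain ⟨e, heE, heq⟩ := hδE
          rw [heq]
          exact mul_le_mul_of_nonneg_right (Finset.single_le_sum (fun e' _ => hc0 _) heE) hFb0
  have key : TendstoUniformly
      (fun (s : Finset (Fin d → ℤ)) (x : Fin d → ℝ) =>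
        ∑ n ∈ s,
          (∑' k : Fin d → ℤ,
            odot (g (x - fun i => α * k i)) (g (x - (fun i => α * k i) - fun i => n i / β)))
            (f (x - fun i => n i / β)))
      (fun x : Fin d → ℝ =>
        ∑' n : Fin d → ℤ,
          (∑' k : Fin d → ℤ,
            odot (g (x - fun i => α * k i)) (g (x - (fun i => α * k i) - fun i => n i / β)))
            (f (x - fun i => n i / β)))
      Filter.atTop := tendstoUniformly_tsum husum hbound
  -- continuity of each summand
  have hcont_n : ∀ n : Fin d → ℤ, Continuous (fun x : Fin d → ℝ =>
      (∑' k : Fin d → ℤ,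
        odot (g (x - fun i => α * k i)) (g (x - (fun i => α * k i) - fun i => n i / β)))
        (f (x - fun i => n i / β))) := by
    intro n
    have hS : Continuous (fun x : Fin d → ℝ => ∑' k : Fin d → ℤ,
        odot (g (x - fun i => α * k i)) (g (x - (fun i => α * k i) - fun i => n i / β))) := by
      rw [continuous_iff_continuousAt]
      intro x0
      have hmemFR : ∀ y ∈ Metric.ball (0 : Fin d → ℝ) (‖x0‖ + 1),
          flr α y ∈ Fintype.piFinset
            (fun _ : Fin d => Finset.Icc (-(⌈(‖x0‖ + 1) / α⌉ + 1)) (⌈(‖x0‖ + 1) / α⌉ + 1)) := by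
        intro y hy
        rw [Fintype.mem_piFinset]
        intro i
        rw [Metric.mem_ball, dist_zero_right] at hy
        have hyi : |y i| < ‖x0‖ + 1 := lt_of_le_of_lt (by simpa using norm_le_pi_norm y i) hy
        rw [abs_lt] at hyi
        have hceil : (‖x0‖ + 1) / α ≤ (⌈(‖x0‖ + 1) / α⌉ : ℝ) := Int.le_ceil _
        have hdiv1 : -((‖x0‖ + 1) / α) ≤ y i / α := by
          rw [← neg_div]
          exact (div_le_div_iff_of_pos_right hα).2 hyi.1.le
        have hdiv2 : y i / α ≤ (‖x0‖ + 1) / α := (div_le_div_iff_of_pos_right hα).2 hyi.2.le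
        rw [Finset.mem_Icc]
        constructor
        · apply Int.le_floor.2
          push_cast
          linarith
        · have hle : y i / α ≤ ((⌈(‖x0‖ + 1) / α⌉ + 1 : ℤ) : ℝ) := by push_cast; linarith
          calc (flr α y) i ≤ ⌊((⌈(‖x0‖ + 1) / α⌉ + 1 : ℤ) : ℝ)⌋ := Int.floor_le_floor hle
            _ = _ := Int.floor_intCast _
      have hTU : TendstoUniformlyOn
          (fun (t : Finset (Fin d → ℤ)) (x : Fin d → ℝ) => ∑ k ∈ t,
            odot (g (x - fun i => α * k i)) (g (x - (fun i => α * k i) - fun i => n i / β)))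
          (fun x : Fin d → ℝ => ∑' k : Fin d → ℤ,
            odot (g (x - fun i => α * k i)) (g (x - (fun i => α * k i) - fun i => n i / β)))
          Filter.atTop (Metric.ball (0 : Fin d → ℝ) (‖x0‖ + 1)) := by
        apply tendstoUniformlyOn_tsum
          (u := fun k : Fin d → ℤ =>
            (∑ m ∈ Fintype.piFinset
              (fun _ : Fin d => Finset.Icc (-(⌈(‖x0‖ + 1) / α⌉ + 1)) (⌈(‖x0‖ + 1) / α⌉ + 1)),
              a (m - k)) * ∑' j, a j)
        · apply Summable.mul_right
          apply summable_sum
          intro m _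
          exact hasum.comp_injective sub_right_injective
        · intro k y hy
          calc ‖odot (g (y - fun i => α * k i))
                (g (y - (fun i => α * k i) - fun i => n i / β))‖
              ≤ a (flr α y - k) * a (flr α (y - fun i => (n i : ℝ) / β) - k) := hTle n y k
            _ ≤ a (flr α y - k) * ∑' j, a j := mul_le_mul_of_nonneg_left (haG _) (ha0 _)
            _ ≤ _ := mul_le_mul_of_nonneg_right
                (Finset.single_le_sum (f := fun m => a (m - k)) (fun m _ => ha0 _)
                  (hmemFR y hy)) hG0
      have hcont_partial : ∀ t : Finset (Fin d → ℤ), Continuous fun x : Fin d → ℝ =>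
          ∑ k ∈ t, odot (g (x - fun i => α * k i))
            (g (x - (fun i => α * k i) - fun i => n i / β)) := by
        intro t
        apply continuous_finset_sum
        intro k _
        have h1 : Continuous fun x : Fin d → ℝ => g (x - fun i => α * k i) :=
          hgc.comp (continuous_id.sub continuous_const)
        have h2 : Continuous fun x : Fin d → ℝ =>
            g (x - (fun i => α * k i) - fun i => (n i : ℝ) / β) :=
          hgc.comp ((continuous_id.sub continuous_const).sub continuous_const)
        exact continuous_odot.comp (h1.prodMk h2)
      have hco := hTU.continuousOn
        (Filter.Eventually.of_forall fun t => (hcont_partial t).continuousOn).frequently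
      apply hco.continuousAt (Metric.isOpen_ball.mem_nhds ?_)
      rw [Metric.mem_ball, dist_zero_right]
      linarith
    exact hS.clm_apply (hfc.comp (continuous_id.sub continuous_const))
  refine ⟨?_, key⟩
  exact (key.continuous (Filter.Eventually.of_forall fun s =>
    continuous_finset_sum _ fun n _ => hcont_n n).frequently).const_smul _


end GaborAux

/-- Let `g ∈ W_H(C₀, L^1_w)` be a continuous window generating a Gabor frame `G(g,α,β)` for
`L²(ℝ^d,H)`. Then the frame operator `S_g` maps `W_H(C₀, L^1_w)` into itself: if
`f ∈ W_H(L^∞, L^1_w)` is continuous, then `S_g f = β^{-d} Σ_n G_n(T_{n/β} f)` is continuous,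
where `G_n(x) = Σ_k (T_{αk}g)(x) ⊙ (T_{αk+n/β}g)(x)`; moreover the series
`Σ_n G_n(T_{n/β} f)` converges uniformly on `ℝ^d`. -/
theorem frame_operator_preserves_continuity {d : ℕ} {H : Type*} [NormedAddCommGroup H]
    [InnerProductSpace ℂ H] [CompleteSpace H]
    (α β : ℝ) (hα : 0 < α) (hβ : 0 < β)
    (w : (Fin d → ℝ) → ℝ)
    (hw_cont : Continuous w) (hw_pos : ∀ x, 0 < w x) (hw_symm : ∀ x, w (-x) = w x)
    (hw_submul : ∀ x y, w (x + y) ≤ w x * w y) (hw0 : w 0 = 1)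
    (g : (Fin d → ℝ) → H) (hgc : Continuous g) (hgW : amalgamNorm α ∞ 1 w g < ∞)
    (hframe : ∃ A B : ℝ, 0 < A ∧
      ∀ f : (Fin d → ℝ) → H, MemLp f 2 volume →
        (A * ∫ x, ‖f x‖ ^ 2) ≤
            (∑' kn : (Fin d → ℤ) × (Fin d → ℤ),
              ‖∫ x, (inner ℂ (tfShift α β g kn.1 kn.2 x) (f x) : ℂ)‖ ^ 2) ∧
          (∑' kn : (Fin d → ℤ) × (Fin d → ℤ),
              ‖∫ x, (inner ℂ (tfShift α β g kn.1 kn.2 x) (f x) : ℂ)‖ ^ 2) ≤ B * ∫ x, ‖f x‖ ^ 2)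
    (f : (Fin d → ℝ) → H) (hfc : Continuous f) (hfW : amalgamNorm α ∞ 1 w f < ∞) :
    Continuous (fun x : Fin d → ℝ => (β ^ d : ℝ)⁻¹ •
        ∑' n : Fin d → ℤ,
          (∑' k : Fin d → ℤ,
            odot (g (x - fun i => α * k i)) (g (x - (fun i => α * k i) - fun i => n i / β)))
            (f (x - fun i => n i / β))) ∧
      TendstoUniformly
        (fun (s : Finset (Fin d → ℤ)) (x : Fin d → ℝ) =>
          ∑ n ∈ s,
            (∑' k : Fin d → ℤ,
              odot (g (x - fun i => α * k i)) (g (x - (fun i => α * k i) - fun i => n i / β)))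
              (f (x - fun i => n i / β)))
        (fun x : Fin d → ℝ =>
          ∑' n : Fin d → ℤ,
            (∑' k : Fin d → ℤ,
              odot (g (x - fun i => α * k i)) (g (x - (fun i => α * k i) - fun i => n i / β)))
              (f (x - fun i => n i / β)))
        Filter.atTop := by
  have hw1 : ∀ x, 1 ≤ w x := by
    intro x
    have h := hw_submul x (-x)
    rw [add_neg_cancel, hw0, hw_symm] at h
    nlinarith [hw_pos x]
  have hamal : ∀ h : (Fin d → ℝ) → H, Continuous h → amalgamNorm α ∞ 1 w h < ∞ →
      ∃ aa : (Fin d → ℤ) → ℝ, (∀ k, 0 ≤ aa k) ∧ Summable aa ∧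
        ∀ x, ‖h x‖ ≤ aa (GaborAux.flr α x) := by
    intro h hhc hh
    have hle : ∑' k : Fin d → ℤ, eLpNorm ((cube α k).indicator h) ∞ volume
        ≤ amalgamNorm α ∞ 1 w h := by
      rw [amalgamNorm, lqNorm]
      rw [if_neg (by norm_num : (1 : ℝ≥0∞) ≠ ∞)]
      simp only [ENNReal.toReal_one, ENNReal.rpow_one, one_div, inv_one]
      exact ENNReal.tsum_le_tsum fun k =>
        le_mul_of_one_le_right (by positivity) (ENNReal.one_le_ofReal.2 (hw1 _))
    have hne : ∑' k : Fin d → ℤ, eLpNorm ((cube α k).indicator h) ∞ volume ≠ ∞ :=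
      (hle.trans_lt hh).ne
    refine ⟨fun k => (eLpNorm ((cube α k).indicator h) ∞ volume).toReal,
      fun k => ENNReal.toReal_nonneg, ENNReal.summable_toReal hne, ?_⟩
    intro x
    have h1 := GaborAux.nnnorm_le_eLpNormTop hα hhc (GaborAux.mem_cube_floor hα x)
    have h2 : eLpNorm ((cube α (GaborAux.flr α x)).indicator h) ∞ volume ≠ ∞ :=
      ne_top_of_le_ne_top hne (ENNReal.le_tsum _)
    have h3 := ENNReal.toReal_mono h2 h1
    simpa using h3
  obtain ⟨a, ha0, hasum, hga⟩ := hamal g hgc hgW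
  obtain ⟨b, hb0, hbsum, hfb⟩ := hamal f hfc hfW
  exact GaborAux.core α β hα hβ g f hgc hfc a b ha0 hb0 hasum hbsum hga hfb
end
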